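/- For every n ≥ 1 and every rational class function y ∈ C(S_n) ⊗ ℚ, the following identity holds in C(S_{n+1}) ⊗ ℚ: ε_{n+1} ∪ r_1(y) − r_1(ε_n ∪ y) = −τ_{n+1} ∪ r_1(ε_n ∪ y) + r_1(τ_n ∪ ε_n ∪ y). -/

import Mathlib

noncomputable section

/-- `permDeg π` is the minimal number of transpositions whose product is `π`. -/
def permDeg {n : ℕ} (π : Equiv.Perm (Fin n)) : ℕ :=
  sInf {d | ∃ l : List (Equiv.Perm (Fin n)),
    (∀ t ∈ l, t.IsSwap) ∧ l.prod = π ∧ l.length = d}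

/-- The cup product on the group ring, extended bilinearly from
`σ ∪ π = σπ` if `deg σ + deg π = deg (σπ)` and `0` otherwise. -/
def cup {n : ℕ} (f g : MonoidAlgebra ℚ (Equiv.Perm (Fin n))) :
    MonoidAlgebra ℚ (Equiv.Perm (Fin n)) :=
  f.coeff.sum fun σ a => g.coeff.sum fun π b =>
    if permDeg σ + permDeg π = permDeg (σ * π)
    then MonoidAlgebra.single (σ * π) (a * b) else 0

/-- `tau n` is the sum of all transpositions in `S_n`, as an element of `ℚ[S_n]`. -/
def tau (n : ℕ) : MonoidAlgebra ℚ (Equiv.Perm (Fin n)) :=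
  letI := Classical.decPred (Equiv.Perm.IsSwap : Equiv.Perm (Fin n) → Prop)
  ∑ σ ∈ Finset.univ.filter (fun σ : Equiv.Perm (Fin n) => σ.IsSwap),
    MonoidAlgebra.single σ (1 : ℚ)

/-- `eps n` is the alternating element `Σ_π sgn(π) π` of `ℚ[S_n]`. -/
def eps (n : ℕ) : MonoidAlgebra ℚ (Equiv.Perm (Fin n)) :=
  ∑ π : Equiv.Perm (Fin n),
    MonoidAlgebra.single π (((Equiv.Perm.sign π : ℤˣ) : ℤ) : ℚ)

/-- The standard inclusion `S_n ⊂ S_{n+1}` (permutations fixing the last letter). -/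
def iotaPerm (n : ℕ) (π : Equiv.Perm (Fin n)) : Equiv.Perm (Fin (n + 1)) :=
  π.viaFintypeEmbedding Fin.castSuccEmb

/-- The induced map `ι : ℚ[S_n] → ℚ[S_{n+1}]`. -/
def iota (n : ℕ) (f : MonoidAlgebra ℚ (Equiv.Perm (Fin n))) :
    MonoidAlgebra ℚ (Equiv.Perm (Fin (n + 1))) :=
  MonoidAlgebra.ofCoeff (Finsupp.mapDomain (iotaPerm n) f.coeff)

/-- `f ∈ ℚ[S_n]` is a class function if its coefficients are constant on
conjugacy classes. -/
def IsClassFun {n : ℕ} (f : MonoidAlgebra ℚ (Equiv.Perm (Fin n))) : Prop :=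
  ∀ σ π : Equiv.Perm (Fin n), f.coeff (σ * π * σ⁻¹) = f.coeff π

/-- The map `r_1 : ℚ[S_n] → ℚ[S_{n+1}]`, `x ↦ (1/n!) Σ_{t ∈ S_{n+1}} t ι(x) t⁻¹`. -/
def r1 (n : ℕ) (x : MonoidAlgebra ℚ (Equiv.Perm (Fin n))) :
    MonoidAlgebra ℚ (Equiv.Perm (Fin (n + 1))) :=
  (n.factorial : ℚ)⁻¹ • ∑ t : Equiv.Perm (Fin (n + 1)),
    MonoidAlgebra.single t 1 * iota n x * MonoidAlgebra.single t⁻¹ 1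

section Aux
open Equiv Equiv.Perm Finset Module

variable {N : ℕ}

lemma permDeg_spec (π : Equiv.Perm (Fin N)) :
    ∃ l : List (Equiv.Perm (Fin N)),
      (∀ t ∈ l, t.IsSwap) ∧ l.prod = π ∧ l.length = permDeg π := by
  have h : {d | ∃ l : List (Equiv.Perm (Fin N)),
      (∀ t ∈ l, t.IsSwap) ∧ l.prod = π ∧ l.length = d}.Nonempty := by
    obtain ⟨l, hprod, hsw⟩ := (Equiv.Perm.truncSwapFactors π).out
    exact ⟨l.length, l, hsw, hprod, rfl⟩
  exact Nat.sInf_mem h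

lemma permDeg_le {π : Equiv.Perm (Fin N)} {l : List (Equiv.Perm (Fin N))}
    (hl : ∀ t ∈ l, t.IsSwap) (hp : l.prod = π) : permDeg π ≤ l.length :=
  Nat.sInf_le ⟨l, hl, hp, rfl⟩

lemma permDeg_one : permDeg (1 : Equiv.Perm (Fin N)) = 0 :=
  Nat.le_zero.mp (permDeg_le (l := []) (by simp) (by simp))

lemma permDeg_eq_zero_iff {π : Equiv.Perm (Fin N)} : permDeg π = 0 ↔ π = 1 := by
  constructor
  · intro h
    obtain ⟨l, _, hp, hlen⟩ := permDeg_spec π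
    rw [h, List.length_eq_zero_iff] at hlen
    simp [hlen] at hp
    exact hp.symm
  · rintro rfl; exact permDeg_one

lemma permDeg_mul_le (σ π : Equiv.Perm (Fin N)) :
    permDeg (σ * π) ≤ permDeg σ + permDeg π := by
  obtain ⟨l₁, hs₁, hp₁, hl₁⟩ := permDeg_spec σ
  obtain ⟨l₂, hs₂, hp₂, hl₂⟩ := permDeg_spec π
  have hsw : ∀ t ∈ l₁ ++ l₂, Equiv.Perm.IsSwap t := by
    intro t ht
    rcases List.mem_append.mp ht with h | h
    exacts [hs₁ t h, hs₂ t h]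
  have := permDeg_le hsw (by rw [List.prod_append, hp₁, hp₂])
  simpa [hl₁, hl₂] using this

lemma permDeg_conj (s π : Equiv.Perm (Fin N)) :
    permDeg (s * π * s⁻¹) = permDeg π := by
  have key : ∀ (s π : Equiv.Perm (Fin N)), permDeg (s * π * s⁻¹) ≤ permDeg π := by
    intro s π
    obtain ⟨l, hs, hp, hlen⟩ := permDeg_spec π
    set c : Equiv.Perm (Fin N) →* Equiv.Perm (Fin N) := (MulAut.conj s).toMonoidHom with hc
    have hcapp : ∀ u, c u = s * u * s⁻¹ := fun u => rfl
    have hprod : (l.map c).prod = s * π * s⁻¹ := by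
      rw [List.prod_hom l c, hp, hcapp]
    have hswaps : ∀ t ∈ l.map c, t.IsSwap := by
      intro t ht
      obtain ⟨u, hu, rfl⟩ := List.mem_map.mp ht
      obtain ⟨x, y, hxy, rfl⟩ := hs u hu
      exact ⟨s x, s y, fun h => hxy (s.injective h),
        by rw [hcapp, ← Equiv.swap_apply_apply]⟩
    calc permDeg (s * π * s⁻¹) ≤ (l.map c).length := permDeg_le hswaps hprod
    _ = permDeg π := by simp [hlen]
  refine le_antisymm (key s π) ?_
  have := key s⁻¹ (s * π * s⁻¹)
  simpa [mul_assoc] using this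

/-- The fixed subspace of a permutation acting on `Fin N → ℚ`. -/
def fixSub (π : Equiv.Perm (Fin N)) : Submodule ℚ (Fin N → ℚ) where
  carrier := {x | ∀ i, x (π i) = x i}
  add_mem' := by intro a b ha hb i; simp [ha i, hb i]
  zero_mem' := by intro i; rfl
  smul_mem' := by intro c x hx i; simp [hx i]

lemma mem_fixSub {π : Equiv.Perm (Fin N)} {x : Fin N → ℚ} :
    x ∈ fixSub π ↔ ∀ i, x (π i) = x i := Iff.rfl

lemma fixSub_one : fixSub (1 : Equiv.Perm (Fin N)) = ⊤ := by
  ext x; simp [mem_fixSub]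

lemma finrank_fixSub_le (π : Equiv.Perm (Fin N)) : finrank ℚ (fixSub π) ≤ N := by
  have := Submodule.finrank_le (fixSub π)
  simpa [Module.finrank_pi] using this

lemma fixSub_swap_finrank {a b : Fin N} (hab : a ≠ b) :
    N ≤ finrank ℚ (fixSub (Equiv.swap a b)) + 1 := by
  classical
  set φ : (Fin N → ℚ) →ₗ[ℚ] ℚ :=
    { toFun := fun x => x a - x b
      map_add' := by intros; simp; ring
      map_smul' := by intros; simp; ring }
  have hker : LinearMap.ker φ ≤ fixSub (Equiv.swap a b) := by
    intro x hx
    have hx' : x a = x b := by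
      have : x a - x b = 0 := hx
      linarith
    intro i
    rcases eq_or_ne i a with rfl | hia
    · rw [Equiv.swap_apply_left]; exact hx'.symm
    rcases eq_or_ne i b with rfl | hib
    · rw [Equiv.swap_apply_right]; exact hx'
    · rw [Equiv.swap_apply_of_ne_of_ne hia hib]
  have h1 : finrank ℚ (LinearMap.range φ) + finrank ℚ (LinearMap.ker φ)
      = finrank ℚ (Fin N → ℚ) := LinearMap.finrank_range_add_finrank_ker φ
  have h2 : finrank ℚ (LinearMap.range φ) ≤ 1 := by
    have := Submodule.finrank_le (LinearMap.range φ)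
    simpa using this
  have h3 : finrank ℚ (LinearMap.ker φ) ≤ finrank ℚ (fixSub (Equiv.swap a b)) :=
    Submodule.finrank_mono hker
  have h4 : finrank ℚ (Fin N → ℚ) = N := by simp [Module.finrank_pi]
  omega

lemma lower_aux (l : List (Equiv.Perm (Fin N))) (hl : ∀ t ∈ l, t.IsSwap) :
    N ≤ l.length + finrank ℚ (fixSub l.prod) := by
  induction l with
  | nil =>
    have : finrank ℚ (⊤ : Submodule ℚ (Fin N → ℚ)) = N := by
      rw [finrank_top]; simp [Module.finrank_pi]
    rw [List.prod_nil, List.length_nil, fixSub_one, this]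
    omega
  | cons t l ih =>
    have hts := hl t List.mem_cons_self
    obtain ⟨a, b, hab, rfl⟩ := hts
    have ih' := ih (fun u hu => hl u (List.mem_cons_of_mem _ hu))
    set ρ := l.prod
    have hsub : fixSub (Equiv.swap a b) ⊓ fixSub ρ ≤ fixSub (Equiv.swap a b * ρ) := by
      rintro x ⟨hxt, hxρ⟩ i
      rw [Equiv.Perm.mul_apply, hxt, hxρ]
    have h1 : finrank ℚ ((fixSub (Equiv.swap a b)) ⊔ (fixSub ρ) : Submodule ℚ (Fin N → ℚ))
        + finrank ℚ ((fixSub (Equiv.swap a b)) ⊓ (fixSub ρ) : Submodule ℚ (Fin N → ℚ))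
        = finrank ℚ (fixSub (Equiv.swap a b)) + finrank ℚ (fixSub ρ) :=
      Submodule.finrank_sup_add_finrank_inf_eq _ _
    have h2 : finrank ℚ ((fixSub (Equiv.swap a b)) ⊔ (fixSub ρ) : Submodule ℚ (Fin N → ℚ)) ≤ N := by
      have := Submodule.finrank_le ((fixSub (Equiv.swap a b)) ⊔ (fixSub ρ) : Submodule ℚ (Fin N → ℚ))
      simpa [Module.finrank_pi] using this
    have h3 := fixSub_swap_finrank hab
    have h5 : finrank ℚ ((fixSub (Equiv.swap a b)) ⊓ (fixSub ρ) : Submodule ℚ (Fin N → ℚ))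
        ≤ finrank ℚ (fixSub (Equiv.swap a b * ρ)) := Submodule.finrank_mono hsub
    have : (Equiv.swap a b :: l).prod = Equiv.swap a b * ρ := by simp [ρ]
    rw [this]
    simp only [List.length_cons]
    omega

lemma le_permDeg_add_finrank (π : Equiv.Perm (Fin N)) :
    N ≤ permDeg π + finrank ℚ (fixSub π) := by
  obtain ⟨l, hs, hp, hlen⟩ := permDeg_spec π
  have := lower_aux l hs
  rw [hp, hlen] at this
  exact this


lemma fixSub_lt_of_swap_mul {π : Equiv.Perm (Fin N)} {a : Fin N} (ha : π a ≠ a) :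
    fixSub π < fixSub (Equiv.swap a (π a) * π) := by
  classical
  constructor
  · intro x hx i
    have hxt : ∀ j, x (Equiv.swap a (π a) j) = x j := by
      intro j
      rcases eq_or_ne j a with rfl | hja
      · rw [Equiv.swap_apply_left]; exact hx j
      rcases eq_or_ne j (π a) with rfl | hjb
      · rw [Equiv.swap_apply_right]; exact (hx a).symm
      · rw [Equiv.swap_apply_of_ne_of_ne hja hjb]
    rw [Equiv.Perm.mul_apply, hxt, hx]
  · intro hle
    have hfix : (Equiv.swap a (π a) * π) a = a := by
      rw [Equiv.Perm.mul_apply, Equiv.swap_apply_right]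
    have hmem : (Pi.single a (1:ℚ) : Fin N → ℚ) ∈ fixSub (Equiv.swap a (π a) * π) := by
      intro i
      rcases eq_or_ne i a with rfl | hia
      · rw [hfix]
      · have hne : (Equiv.swap a (π a) * π) i ≠ a := by
          intro hc
          exact hia ((Equiv.swap a (π a) * π).injective (hc.trans hfix.symm))
        rw [Pi.single_apply, Pi.single_apply, if_neg hne, if_neg hia]
    have hmem' := hle hmem
    have := hmem' a
    rw [Pi.single_apply, Pi.single_apply, if_neg ha, if_pos rfl] at this
    exact one_ne_zero this.symm

lemma support_swap_mul_ssubset {π : Equiv.Perm (Fin N)} {a : Fin N} (ha : π a ≠ a) :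
    (Equiv.swap a (π a) * π).support ⊂ π.support := by
  classical
  have hfix : (Equiv.swap a (π a) * π) a = a := by
    rw [Equiv.Perm.mul_apply, Equiv.swap_apply_right]
  have hsub : (Equiv.swap a (π a) * π).support ⊆ π.support := by
    intro i hi
    by_contra hni
    have hπi : π i = i := notMem_support.mp hni
    have hit : Equiv.swap a (π a) i ≠ i := by
      have := mem_support.mp hi
      rw [Equiv.Perm.mul_apply, hπi] at this
      exact this
    have : i = a ∨ i = π a := by
      by_contra hcon
      push_neg at hcon
      exact hit (Equiv.swap_apply_of_ne_of_ne hcon.1 hcon.2)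
    rcases this with rfl | rfl
    · exact ha hπi
    · exact ha (π.injective hπi)
  rw [Finset.ssubset_iff_of_subset hsub]
  exact ⟨a, mem_support.mpr ha, notMem_support.mpr hfix⟩

lemma permDeg_add_finrank_le_aux :
    ∀ (k : ℕ) (π : Equiv.Perm (Fin N)), π.support.card ≤ k →
      permDeg π + finrank ℚ (fixSub π) ≤ N := by
  intro k
  induction k with
  | zero =>
    intro π hπ
    have : π = 1 := by
      rw [← Equiv.Perm.support_eq_empty_iff]
      exact Finset.card_eq_zero.mp (Nat.le_zero.mp hπ)
    subst this
    rw [permDeg_one, fixSub_one, finrank_top]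
    simp [Module.finrank_pi]
  | succ k ih =>
    intro π hπ
    by_cases h1 : π = 1
    · subst h1
      rw [permDeg_one, fixSub_one, finrank_top]
      simp [Module.finrank_pi]
    · have : ∃ a, π a ≠ a := by
        by_contra hcon
        push_neg at hcon
        exact h1 (Equiv.ext hcon)
      obtain ⟨a, ha⟩ := this
      have hlt := fixSub_lt_of_swap_mul ha
      have hrank := Submodule.finrank_lt_finrank_of_lt hlt
      have hss := support_swap_mul_ssubset ha
      have hcard : (Equiv.swap a (π a) * π).support.card ≤ k := by
        have := Finset.card_lt_card hss
        omega
      have ihr := ih _ hcard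
      have hdeg : permDeg π ≤ permDeg (Equiv.swap a (π a) * π) + 1 := by
        obtain ⟨l, hs, hp, hlen⟩ := permDeg_spec (Equiv.swap a (π a) * π)
        have hsw : ∀ t ∈ (Equiv.swap a (π a)) :: l, Equiv.Perm.IsSwap t := by
          intro t ht
          rcases List.mem_cons.mp ht with rfl | h
          · exact ⟨a, π a, Ne.symm ha, rfl⟩
          · exact hs t h
        have hprod : ((Equiv.swap a (π a)) :: l).prod = π := by
          rw [List.prod_cons, hp, ← mul_assoc, Equiv.swap_mul_self, one_mul]
        have := permDeg_le hsw hprod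
        simpa [hlen] using this
      omega

lemma permDeg_add_finrank (π : Equiv.Perm (Fin N)) :
    permDeg π + finrank ℚ (fixSub π) = N :=
  le_antisymm (permDeg_add_finrank_le_aux π.support.card π le_rfl)
    (le_permDeg_add_finrank π)

lemma permDeg_swap {a b : Fin N} (hab : a ≠ b) :
    permDeg (Equiv.swap a b) = 1 := by
  have h1 : permDeg (Equiv.swap a b) ≤ 1 := by
    have hsw : ∀ t ∈ [Equiv.swap a b], Equiv.Perm.IsSwap t := by
      intro t ht
      rw [List.mem_singleton] at ht
      subst ht
      exact ⟨a, b, hab, rfl⟩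
    have := permDeg_le (π := Equiv.swap a b) hsw (by simp)
    simpa using this
  have h2 : permDeg (Equiv.swap a b) ≠ 0 := by
    intro hc
    have hc' := permDeg_eq_zero_iff.mp hc
    exact hab (by rw [← Equiv.swap_apply_left a b, hc', Equiv.Perm.one_apply])
  omega


-- iotaPerm basics (here we inline the definition for testing; in final file it's given)
lemma iotaPerm_castSucc (π : Equiv.Perm (Fin N)) (i : Fin N) :
    iotaPerm N π (Fin.castSucc i) = Fin.castSucc (π i) := by
  have := Equiv.Perm.viaFintypeEmbedding_apply_image π Fin.castSuccEmb i
  simpa [iotaPerm] using this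

lemma iotaPerm_last (π : Equiv.Perm (Fin N)) :
    iotaPerm N π (Fin.last N) = Fin.last N := by
  have hnot : Fin.last N ∉ Set.range (Fin.castSuccEmb : Fin N ↪ Fin (N+1)) := by
    rintro ⟨i, hi⟩
    exact (Fin.castSucc_lt_last i).ne (by simpa using hi)
  exact Equiv.Perm.viaFintypeEmbedding_apply_notMem_range π Fin.castSuccEmb hnot

lemma iotaPerm_mul (σ π : Equiv.Perm (Fin N)) :
    iotaPerm N (σ * π) = iotaPerm N σ * iotaPerm N π := by
  unfold iotaPerm Equiv.Perm.viaFintypeEmbedding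
  exact (Equiv.Perm.extendDomain_mul _ σ π).symm

lemma iotaPerm_one : iotaPerm N 1 = 1 := by
  unfold iotaPerm Equiv.Perm.viaFintypeEmbedding
  exact Equiv.Perm.extendDomain_one _

/-- iotaPerm as a monoid hom. -/
def iotaHom (N : ℕ) : Equiv.Perm (Fin N) →* Equiv.Perm (Fin (N+1)) where
  toFun := iotaPerm N
  map_one' := iotaPerm_one
  map_mul' := iotaPerm_mul

lemma iotaPerm_injective : Function.Injective (iotaPerm N) := by
  intro σ σ' h
  ext i
  have := congrArg (fun ρ : Equiv.Perm (Fin (N+1)) => ρ (Fin.castSucc i)) h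
  simp only [iotaPerm_castSucc] at this
  exact congrArg Fin.val (Fin.castSucc_injective N this)

lemma iotaPerm_swap (a b : Fin N) :
    iotaPerm N (Equiv.swap a b) = Equiv.swap (Fin.castSucc a) (Fin.castSucc b) := by
  ext i
  refine Fin.lastCases ?_ ?_ i
  · rw [iotaPerm_last, Equiv.swap_apply_of_ne_of_ne (Fin.castSucc_lt_last a).ne'
      (Fin.castSucc_lt_last b).ne']
  · intro j
    rw [iotaPerm_castSucc]
    rcases eq_or_ne j a with rfl | hja
    · rw [Equiv.swap_apply_left, Equiv.swap_apply_left]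
    rcases eq_or_ne j b with rfl | hjb
    · rw [Equiv.swap_apply_right, Equiv.swap_apply_right]
    · rw [Equiv.swap_apply_of_ne_of_ne hja hjb, Equiv.swap_apply_of_ne_of_ne
        (fun h => hja (Fin.castSucc_injective N h)) (fun h => hjb (Fin.castSucc_injective N h))]

lemma iotaPerm_sign (π : Equiv.Perm (Fin N)) :
    Equiv.Perm.sign (iotaPerm N π) = Equiv.Perm.sign π :=
  Equiv.Perm.viaFintypeEmbedding_sign π Fin.castSuccEmb

/-- restriction linear map used to bound the fixed space of `iotaPerm`. -/
lemma finrank_fixSub_iotaPerm_le (π : Equiv.Perm (Fin N)) :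
    finrank ℚ (fixSub (iotaPerm N π)) ≤ finrank ℚ (fixSub π) + 1 := by
  classical
  set L : (fixSub (iotaPerm N π)) →ₗ[ℚ] (fixSub π) × ℚ :=
    { toFun := fun x =>
        (⟨fun i => (x : Fin (N+1) → ℚ) (Fin.castSucc i), by
          intro i
          have hx := x.2 (Fin.castSucc i)
          rw [iotaPerm_castSucc] at hx
          exact hx⟩, (x : Fin (N+1) → ℚ) (Fin.last N))
      map_add' := by intros x y; refine Prod.ext ?_ rfl; ext i; rfl
      map_smul' := by intros c x; refine Prod.ext ?_ rfl; ext i; rfl } with hL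
  have hinj : Function.Injective L := by
    intro x y hxy
    have h1 := congrArg Prod.fst hxy
    have h2 := congrArg Prod.snd hxy
    ext i
    refine Fin.lastCases ?_ ?_ i
    · exact h2
    · intro j
      exact congrFun (congrArg (fun z : fixSub π => (z : Fin N → ℚ)) h1) j
  have := LinearMap.finrank_le_finrank_of_injective hinj
  simpa [Module.finrank_prod] using this

lemma permDeg_iotaPerm (π : Equiv.Perm (Fin N)) :
    permDeg (iotaPerm N π) = permDeg π := by
  have hle : permDeg (iotaPerm N π) ≤ permDeg π := by
    obtain ⟨l, hs, hp, hlen⟩ := permDeg_spec π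
    have hprod : (l.map (iotaHom N)).prod = iotaPerm N π := by
      rw [List.prod_hom l (iotaHom N), hp]; rfl
    have hswaps : ∀ t ∈ l.map (iotaHom N), Equiv.Perm.IsSwap t := by
      intro t ht
      obtain ⟨u, hu, rfl⟩ := List.mem_map.mp ht
      obtain ⟨x, y, hxy, rfl⟩ := hs u hu
      refine ⟨Fin.castSucc x, Fin.castSucc y, fun h => hxy (Fin.castSucc_injective N h), ?_⟩
      exact iotaPerm_swap x y
    have := permDeg_le hswaps hprod
    simpa [hlen] using this
  have h1 := permDeg_add_finrank (iotaPerm N π)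
  have h2 := permDeg_add_finrank π
  have h3 := finrank_fixSub_iotaPerm_le π
  omega

lemma permDeg_swapLast_mul (σ : Equiv.Perm (Fin N)) (c : Fin N) :
    permDeg (Equiv.swap (Fin.castSucc c) (Fin.last N) * iotaPerm N σ)
      = permDeg (iotaPerm N σ) + 1 := by
  classical
  set t := Equiv.swap (Fin.castSucc c) (Fin.last N) with ht
  set ρ := iotaPerm N σ with hρ
  have hcne : Fin.castSucc c ≠ Fin.last N := (Fin.castSucc_lt_last c).ne
  have hle : permDeg (t * ρ) ≤ permDeg ρ + 1 := by
    have := permDeg_mul_le t ρ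
    rw [permDeg_swap hcne] at this
    omega
  have hρlast : ρ (Fin.last N) = Fin.last N := iotaPerm_last σ
  -- fixSub (t * ρ) < fixSub ρ
  have hlt : fixSub (t * ρ) < fixSub ρ := by
    constructor
    · intro x hx
      have hcl : x (Fin.castSucc c) = x (Fin.last N) := by
        have := hx (Fin.last N)
        rw [Equiv.Perm.mul_apply, hρlast, ht, Equiv.swap_apply_right] at this
        exact this
      have hxt : ∀ j, x (t j) = x j := by
        intro j
        rcases eq_or_ne j (Fin.castSucc c) with rfl | hja
        · rw [ht, Equiv.swap_apply_left]; exact hcl.symm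
        rcases eq_or_ne j (Fin.last N) with rfl | hjb
        · rw [ht, Equiv.swap_apply_right]; exact hcl
        · rw [ht, Equiv.swap_apply_of_ne_of_ne hja hjb]
      intro i
      have := hx i
      rw [Equiv.Perm.mul_apply, hxt] at this
      exact this
    · intro hle'
      have hmem : (Pi.single (Fin.last N) (1:ℚ) : Fin (N+1) → ℚ) ∈ fixSub ρ := by
        intro i
        rcases eq_or_ne i (Fin.last N) with rfl | hia
        · rw [hρlast]
        · have : ρ i ≠ Fin.last N := by
            intro hcon
            exact hia (ρ.injective (hcon.trans hρlast.symm))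
          rw [Pi.single_apply, Pi.single_apply, if_neg this, if_neg hia]
      have hmem' := hle' hmem
      have := hmem' (Fin.last N)
      rw [Equiv.Perm.mul_apply, hρlast, ht, Equiv.swap_apply_right] at this
      rw [Pi.single_apply, Pi.single_apply, if_neg hcne, if_pos rfl] at this
      exact zero_ne_one this
  have hrank := Submodule.finrank_lt_finrank_of_lt hlt
  have h1 := permDeg_add_finrank (t * ρ)
  have h2 := permDeg_add_finrank ρ
  omega


open MonoidAlgebra in
/-- elementary cup product of two group elements -/
def cupUnit {N : ℕ} (σ π : Equiv.Perm (Fin N)) : MonoidAlgebra ℚ (Equiv.Perm (Fin N)) :=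
  if permDeg σ + permDeg π = permDeg (σ * π) then MonoidAlgebra.single (σ * π) 1 else 0

lemma cup_eq_sum (f g : MonoidAlgebra ℚ (Equiv.Perm (Fin N))) :
    cup f g = ∑ σ : Equiv.Perm (Fin N), ∑ π : Equiv.Perm (Fin N),
      (f.coeff σ * g.coeff π) • cupUnit σ π := by
  classical
  unfold cup
  rw [Finsupp.sum_fintype]
  · refine Finset.sum_congr rfl fun σ _ => ?_
    rw [Finsupp.sum_fintype]
    · refine Finset.sum_congr rfl fun π _ => ?_
      unfold cupUnit
      split_ifs with h
      · rw [MonoidAlgebra.smul_single, smul_eq_mul, mul_one]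
      · simp
    · intro π; simp
  · intro σ; simp

lemma cup_add_left (f f' g : MonoidAlgebra ℚ (Equiv.Perm (Fin N))) :
    cup (f + f') g = cup f g + cup f' g := by
  have happ : ∀ σ, (f + f').coeff σ = f.coeff σ + f'.coeff σ := fun _ => rfl
  simp [cup_eq_sum, happ, add_mul, add_smul, Finset.sum_add_distrib]

lemma cup_add_right (f g g' : MonoidAlgebra ℚ (Equiv.Perm (Fin N))) :
    cup f (g + g') = cup f g + cup f g' := by
  have happ : ∀ π, (g + g').coeff π = g.coeff π + g'.coeff π := fun _ => rfl
  simp [cup_eq_sum, happ, mul_add, add_smul, Finset.sum_add_distrib]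

lemma cup_smul_left (a : ℚ) (f g : MonoidAlgebra ℚ (Equiv.Perm (Fin N))) :
    cup (a • f) g = a • cup f g := by
  have happ : ∀ σ, (a • f).coeff σ = a * f.coeff σ := fun _ => rfl
  simp [cup_eq_sum, happ, mul_assoc, mul_smul, Finset.smul_sum]

lemma cup_smul_right (a : ℚ) (f g : MonoidAlgebra ℚ (Equiv.Perm (Fin N))) :
    cup f (a • g) = a • cup f g := by
  have happ : ∀ π, (a • g).coeff π = a * g.coeff π := fun _ => rfl
  simp only [cup_eq_sum, happ, Finset.smul_sum]
  refine Finset.sum_congr rfl fun σ _ => Finset.sum_congr rfl fun π _ => ?_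
  rw [smul_smul]
  congr 1
  ring

/-- cup as a bilinear map -/
def cupBil (N : ℕ) : MonoidAlgebra ℚ (Equiv.Perm (Fin N)) →ₗ[ℚ]
    MonoidAlgebra ℚ (Equiv.Perm (Fin N)) →ₗ[ℚ] MonoidAlgebra ℚ (Equiv.Perm (Fin N)) :=
  LinearMap.mk₂ ℚ cup cup_add_left cup_smul_left cup_add_right cup_smul_right

lemma cupBil_apply (f g : MonoidAlgebra ℚ (Equiv.Perm (Fin N))) :
    cupBil N f g = cup f g := rfl

lemma cup_zero_left (g : MonoidAlgebra ℚ (Equiv.Perm (Fin N))) : cup 0 g = 0 := by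
  rw [← cupBil_apply]
  simp

lemma cup_zero_right (f : MonoidAlgebra ℚ (Equiv.Perm (Fin N))) : cup f 0 = 0 := by
  rw [← cupBil_apply]
  simp

lemma cup_sub_left (f f' g : MonoidAlgebra ℚ (Equiv.Perm (Fin N))) :
    cup (f - f') g = cup f g - cup f' g := by
  simp only [← cupBil_apply, map_sub, LinearMap.sub_apply]

lemma cup_sum_left {ι : Type*} (s : Finset ι) (F : ι → MonoidAlgebra ℚ (Equiv.Perm (Fin N)))
    (g : MonoidAlgebra ℚ (Equiv.Perm (Fin N))) :
    cup (∑ i ∈ s, F i) g = ∑ i ∈ s, cup (F i) g := by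
  simp only [← cupBil_apply, map_sum, LinearMap.sum_apply]

lemma cup_sum_right {ι : Type*} (f : MonoidAlgebra ℚ (Equiv.Perm (Fin N))) (s : Finset ι)
    (F : ι → MonoidAlgebra ℚ (Equiv.Perm (Fin N))) :
    cup f (∑ i ∈ s, F i) = ∑ i ∈ s, cup f (F i) := by
  simp only [← cupBil_apply, map_sum]

lemma cup_single_single (σ π : Equiv.Perm (Fin N)) (a b : ℚ) :
    cup (MonoidAlgebra.single σ a) (MonoidAlgebra.single π b) = (a * b) • cupUnit σ π := by
  classical
  rw [cup_eq_sum]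
  rw [Finset.sum_eq_single σ]
  · rw [Finset.sum_eq_single π]
    · simp [MonoidAlgebra.coeff_single, Finsupp.single_apply]
    · intro π' _ hπ'
      simp [MonoidAlgebra.coeff_single, Finsupp.single_apply, Ne.symm hπ']
    · simp
  · intro σ' _ hσ'
    simp [MonoidAlgebra.coeff_single, Finsupp.single_apply, Ne.symm hσ']
  · simp

lemma cup_single_one_left (a : ℚ) (f : MonoidAlgebra ℚ (Equiv.Perm (Fin N))) :
    cup (MonoidAlgebra.single (1 : Equiv.Perm (Fin N)) a) f = a • f := by
  classical
  have hunit : ∀ π : Equiv.Perm (Fin N), cupUnit 1 π = MonoidAlgebra.single π 1 := by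
    intro π
    unfold cupUnit
    rw [permDeg_one, one_mul, zero_add, if_pos rfl]
  rw [cup_eq_sum]
  rw [Finset.sum_eq_single 1]
  · have : f = ∑ π : Equiv.Perm (Fin N), MonoidAlgebra.single π (f.coeff π) := by
      rw [← Finsupp.sum_fintype f.coeff MonoidAlgebra.single (fun i => MonoidAlgebra.single_zero i)]
      exact (MonoidAlgebra.sum_coeff_single f).symm
    conv_rhs => rw [this]
    rw [Finset.smul_sum]
    refine Finset.sum_congr rfl fun π _ => ?_
    rw [hunit, MonoidAlgebra.coeff_single, Finsupp.single_apply, if_pos rfl, MonoidAlgebra.smul_single,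
      MonoidAlgebra.smul_single]
    simp [mul_comm]
  · intro σ' _ hσ'
    simp [MonoidAlgebra.coeff_single, Finsupp.single_apply, Ne.symm hσ']
  · simp

lemma cup_assoc (f g h : MonoidAlgebra ℚ (Equiv.Perm (Fin N))) :
    cup (cup f g) h = cup f (cup g h) := by
  classical
  induction f using MonoidAlgebra.induction_linear with
  | zero => simp only [cup_zero_left, cup_zero_right]
  | add f f' hf hf' => rw [cup_add_left, cup_add_left, cup_add_left, hf, hf']
  | single σ a =>
    induction g using MonoidAlgebra.induction_linear with
    | zero => simp only [cup_zero_left, cup_zero_right]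
    | add g g' hg hg' => rw [cup_add_left, cup_add_right, cup_add_left, cup_add_right, hg, hg']
    | single π b =>
      induction h using MonoidAlgebra.induction_linear with
      | zero => simp only [cup_zero_left, cup_zero_right]
      | add h h' hh hh' => rw [cup_add_right, cup_add_right, cup_add_right, hh, hh']
      | single ρ c =>
        have s1 := permDeg_mul_le σ π
        have s2 := permDeg_mul_le π ρ
        have s3 := permDeg_mul_le (σ * π) ρ
        have s4 := permDeg_mul_le σ (π * ρ)
        have ea : σ * (π * ρ) = σ * π * ρ := (mul_assoc σ π ρ).symm
        rw [ea] at s4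
        rw [cup_single_single, cup_single_single, cup_smul_left, cup_smul_right]
        unfold cupUnit
        split_ifs with h1 h3
        · rw [cup_single_single, cup_single_single]
          unfold cupUnit
          rw [ea]
          split_ifs with h2 h4
          · rw [smul_smul, smul_smul]
            congr 1
            ring
          · omega
          · omega
          · simp
        · rw [cup_zero_right, smul_zero, cup_single_single]
          unfold cupUnit
          rw [if_neg (by omega)]
          simp
        · rw [cup_zero_left, smul_zero, cup_single_single]
          unfold cupUnit
          rw [ea, if_neg (by omega)]
          simp
        · rw [cup_zero_left, cup_zero_right, smul_zero, smul_zero]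


/-- conjugation of the group algebra by a group element -/
def conjA {N : ℕ} (t : Equiv.Perm (Fin N)) (x : MonoidAlgebra ℚ (Equiv.Perm (Fin N))) :
    MonoidAlgebra ℚ (Equiv.Perm (Fin N)) :=
  MonoidAlgebra.single t 1 * x * MonoidAlgebra.single t⁻¹ 1

lemma conjA_single (t π : Equiv.Perm (Fin N)) (b : ℚ) :
    conjA t (MonoidAlgebra.single π b) = MonoidAlgebra.single (t * π * t⁻¹) b := by
  unfold conjA
  rw [MonoidAlgebra.single_mul_single, MonoidAlgebra.single_mul_single]
  ring_nf

lemma conjA_zero (t : Equiv.Perm (Fin N)) : conjA t 0 = 0 := by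
  unfold conjA; rw [mul_zero, zero_mul]

lemma conjA_add (t : Equiv.Perm (Fin N)) (x y : MonoidAlgebra ℚ (Equiv.Perm (Fin N))) :
    conjA t (x + y) = conjA t x + conjA t y := by
  unfold conjA; rw [mul_add, add_mul]

lemma conjA_sub (t : Equiv.Perm (Fin N)) (x y : MonoidAlgebra ℚ (Equiv.Perm (Fin N))) :
    conjA t (x - y) = conjA t x - conjA t y := by
  unfold conjA; rw [mul_sub, sub_mul]

lemma conjA_smul (t : Equiv.Perm (Fin N)) (a : ℚ) (x : MonoidAlgebra ℚ (Equiv.Perm (Fin N))) :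
    conjA t (a • x) = a • conjA t x := by
  unfold conjA
  rw [mul_smul_comm, smul_mul_assoc]

lemma conjA_sum {ι : Type*} (t : Equiv.Perm (Fin N)) (s : Finset ι)
    (F : ι → MonoidAlgebra ℚ (Equiv.Perm (Fin N))) :
    conjA t (∑ i ∈ s, F i) = ∑ i ∈ s, conjA t (F i) := by
  unfold conjA
  rw [Finset.mul_sum, Finset.sum_mul]

lemma cupUnit_conj (t σ π : Equiv.Perm (Fin N)) :
    cupUnit (t * σ * t⁻¹) (t * π * t⁻¹) = conjA t (cupUnit σ π) := by
  unfold cupUnit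
  have hm : (t * σ * t⁻¹) * (t * π * t⁻¹) = t * (σ * π) * t⁻¹ := by group
  rw [hm, permDeg_conj, permDeg_conj, permDeg_conj]
  split_ifs with h
  · rw [conjA_single]
  · rw [conjA_zero]

lemma cup_conjA_comm (c : Equiv.Perm (Fin N) → ℚ)
    (hc : ∀ s p : Equiv.Perm (Fin N), c (s * p * s⁻¹) = c p)
    (t : Equiv.Perm (Fin N)) (x : MonoidAlgebra ℚ (Equiv.Perm (Fin N))) :
    cup (∑ σ : Equiv.Perm (Fin N), MonoidAlgebra.single σ (c σ)) (conjA t x)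
      = conjA t (cup (∑ σ : Equiv.Perm (Fin N), MonoidAlgebra.single σ (c σ)) x) := by
  induction x using MonoidAlgebra.induction_linear with
  | zero => rw [conjA_zero, cup_zero_right, conjA_zero]
  | add x y hx hy => rw [conjA_add, cup_add_right, cup_add_right, hx, hy, conjA_add]
  | single π b =>
    rw [conjA_single, cup_sum_left, cup_sum_left, conjA_sum]
    refine (Fintype.sum_bijective (fun σ => t * σ * t⁻¹) (MulAut.conj t).toEquiv.bijective _ _ ?_).symm
    intro σ
    rw [cup_single_single, cup_single_single, hc, cupUnit_conj, conjA_smul]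

lemma eps_conjA_comm (t : Equiv.Perm (Fin N)) (x : MonoidAlgebra ℚ (Equiv.Perm (Fin N))) :
    cup (eps N) (conjA t x) = conjA t (cup (eps N) x) := by
  have hc : ∀ s p : Equiv.Perm (Fin N),
      ((((Equiv.Perm.sign (s * p * s⁻¹)) : ℤˣ) : ℤ) : ℚ) = (((Equiv.Perm.sign p : ℤˣ) : ℤ) : ℚ) := by
    intro s p
    have : Equiv.Perm.sign (s * p * s⁻¹) = Equiv.Perm.sign p := by
      rw [map_mul, map_mul, map_inv]
      rcases Int.units_eq_one_or (Equiv.Perm.sign s) with hs | hs <;>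
        rcases Int.units_eq_one_or (Equiv.Perm.sign p) with hp | hp <;>
          simp [hs, hp]
    rw [this]
  exact cup_conjA_comm _ hc t x

lemma isSwap_conj {s p : Equiv.Perm (Fin N)} (h : p.IsSwap) : (s * p * s⁻¹).IsSwap := by
  obtain ⟨x, y, hxy, rfl⟩ := h
  exact ⟨s x, s y, fun hc => hxy (s.injective hc), by rw [← Equiv.swap_apply_apply]⟩

lemma isSwap_conj_iff (s p : Equiv.Perm (Fin N)) : (s * p * s⁻¹).IsSwap ↔ p.IsSwap := by
  constructor
  · intro h
    have := isSwap_conj (s := s⁻¹) h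
    simpa [mul_assoc] using this
  · exact isSwap_conj

open scoped Classical in
lemma tau_eq : tau N = ∑ σ : Equiv.Perm (Fin N),
    MonoidAlgebra.single σ (if Equiv.Perm.IsSwap σ then (1:ℚ) else 0) := by
  unfold tau
  rw [Finset.sum_filter]
  refine Finset.sum_congr rfl fun σ _ => ?_
  by_cases h : σ.IsSwap <;> simp [h]

open scoped Classical in
lemma tau_conjA_comm (t : Equiv.Perm (Fin N)) (x : MonoidAlgebra ℚ (Equiv.Perm (Fin N))) :
    cup (tau N) (conjA t x) = conjA t (cup (tau N) x) := by
  rw [tau_eq]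
  refine cup_conjA_comm _ ?_ t x
  intro s p
  by_cases h : p.IsSwap
  · rw [if_pos h, if_pos ((isSwap_conj_iff s p).mpr h)]
  · rw [if_neg h, if_neg (fun hc => h ((isSwap_conj_iff s p).mp hc))]

-- iota lemmas
lemma iota_single (σ : Equiv.Perm (Fin N)) (a : ℚ) :
    iota N (MonoidAlgebra.single σ a) = MonoidAlgebra.single (iotaPerm N σ) a :=
  congrArg MonoidAlgebra.ofCoeff Finsupp.mapDomain_single

lemma iota_zero : iota N 0 = 0 := congrArg MonoidAlgebra.ofCoeff Finsupp.mapDomain_zero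

lemma iota_add (x y : MonoidAlgebra ℚ (Equiv.Perm (Fin N))) :
    iota N (x + y) = iota N x + iota N y :=
  congrArg MonoidAlgebra.ofCoeff Finsupp.mapDomain_add

lemma iota_sum {ι : Type*} (s : Finset ι) (F : ι → MonoidAlgebra ℚ (Equiv.Perm (Fin N))) :
    iota N (∑ i ∈ s, F i) = ∑ i ∈ s, iota N (F i) := by
  classical
  induction s using Finset.induction_on with
  | empty => simp [iota_zero]
  | insert _ _ hnot ih => rename_i a s'
                          rw [Finset.sum_insert hnot, Finset.sum_insert hnot, iota_add, ih]

lemma iota_smul (a : ℚ) (x : MonoidAlgebra ℚ (Equiv.Perm (Fin N))) :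
    iota N (a • x) = a • iota N x := by
  unfold iota
  rw [MonoidAlgebra.coeff_smul, Finsupp.mapDomain_smul]
  rfl

lemma cupUnit_iota (σ π : Equiv.Perm (Fin N)) :
    cupUnit (iotaPerm N σ) (iotaPerm N π) = iota N (cupUnit σ π) := by
  unfold cupUnit
  rw [← iotaPerm_mul, permDeg_iotaPerm, permDeg_iotaPerm, permDeg_iotaPerm]
  split_ifs with h
  · rw [iota_single]
  · rw [iota_zero]

lemma iota_cup (x y : MonoidAlgebra ℚ (Equiv.Perm (Fin N))) :
    iota N (cup x y) = cup (iota N x) (iota N y) := by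
  induction x using MonoidAlgebra.induction_linear with
  | zero => rw [cup_zero_left, iota_zero, cup_zero_left]
  | add x x' hx hx' => rw [cup_add_left, iota_add, iota_add, cup_add_left, hx, hx']
  | single σ a =>
    induction y using MonoidAlgebra.induction_linear with
    | zero => rw [cup_zero_right, iota_zero, cup_zero_right]
    | add y y' hy hy' => rw [cup_add_right, iota_add, iota_add, cup_add_right, hy, hy']
    | single π b =>
      rw [cup_single_single, iota_smul, iota_single, iota_single, cup_single_single,
        cupUnit_iota]


/-- the sum of the transpositions moving the last letter -/
def tauPrime (N : ℕ) : MonoidAlgebra ℚ (Equiv.Perm (Fin (N + 1))) :=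
  ∑ c : Fin N, MonoidAlgebra.single (Equiv.swap (Fin.castSucc c) (Fin.last N)) (1 : ℚ)

lemma bijE : Function.Bijective (fun p : Fin (N+1) × Equiv.Perm (Fin N) =>
    Equiv.swap p.1 (Fin.last N) * iotaPerm N p.2) := by
  rw [Fintype.bijective_iff_injective_and_card]
  constructor
  · rintro ⟨k, σ⟩ ⟨k', σ'⟩ h
    simp only at h
    have h1 : k = k' := by
      have h0 := congrArg (fun ρ : Equiv.Perm (Fin (N+1)) => ρ (Fin.last N)) h
      simpa [Equiv.Perm.mul_apply, iotaPerm_last, Equiv.swap_apply_right] using h0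
    subst h1
    have h2 : iotaPerm N σ = iotaPerm N σ' := mul_left_cancel h
    have h3 := iotaPerm_injective h2
    simp [h3]
  · simp [Fintype.card_perm, Fintype.card_fin, Nat.factorial_succ]

lemma eps_succ : eps (N + 1) = iota N (eps N) - cup (tauPrime N) (iota N (eps N)) := by
  classical
  have hiota : iota N (eps N) = ∑ σ : Equiv.Perm (Fin N),
      MonoidAlgebra.single (iotaPerm N σ) (((Equiv.Perm.sign σ : ℤˣ) : ℤ) : ℚ) := by
    unfold eps
    rw [iota_sum]
    exact Finset.sum_congr rfl fun σ _ => iota_single σ _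
  have hcup : cup (tauPrime N) (iota N (eps N))
      = ∑ c : Fin N, ∑ σ : Equiv.Perm (Fin N),
          MonoidAlgebra.single (Equiv.swap (Fin.castSucc c) (Fin.last N) * iotaPerm N σ)
            (((Equiv.Perm.sign σ : ℤˣ) : ℤ) : ℚ) := by
    rw [hiota]
    unfold tauPrime
    rw [cup_sum_left]
    refine Finset.sum_congr rfl fun c _ => ?_
    rw [cup_sum_right]
    refine Finset.sum_congr rfl fun σ _ => ?_
    rw [cup_single_single]
    unfold cupUnit
    rw [if_pos]
    · rw [MonoidAlgebra.smul_single, smul_eq_mul, one_mul, mul_one]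
    · rw [permDeg_swap (Fin.castSucc_lt_last c).ne, permDeg_swapLast_mul]
      omega
  -- expand eps (N+1) over the bijection
  have hexp : eps (N + 1) = ∑ p : Fin (N+1) × Equiv.Perm (Fin N),
      MonoidAlgebra.single (Equiv.swap p.1 (Fin.last N) * iotaPerm N p.2)
        (((Equiv.Perm.sign (Equiv.swap p.1 (Fin.last N) * iotaPerm N p.2) : ℤˣ) : ℤ) : ℚ) := by
    unfold eps
    exact (Fintype.sum_bijective _ bijE _ _ (fun p => rfl)).symm
  rw [hexp, Fintype.sum_prod_type, Fin.sum_univ_castSucc]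
  have hlast : ∀ σ : Equiv.Perm (Fin N),
      Equiv.swap (Fin.last N) (Fin.last N) * iotaPerm N σ = iotaPerm N σ := by
    intro σ; rw [Equiv.swap_self]; rfl
  have hterm_last : (∑ σ : Equiv.Perm (Fin N),
      MonoidAlgebra.single (Equiv.swap (Fin.last N) (Fin.last N) * iotaPerm N σ)
        (((Equiv.Perm.sign (Equiv.swap (Fin.last N) (Fin.last N) * iotaPerm N σ) : ℤˣ) : ℤ) : ℚ))
      = iota N (eps N) := by
    rw [hiota]
    refine Finset.sum_congr rfl fun σ _ => ?_
    rw [hlast, iotaPerm_sign]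
  have hterm_c : ∀ c : Fin N, (∑ σ : Equiv.Perm (Fin N),
      MonoidAlgebra.single (Equiv.swap (Fin.castSucc c) (Fin.last N) * iotaPerm N σ)
        (((Equiv.Perm.sign (Equiv.swap (Fin.castSucc c) (Fin.last N) * iotaPerm N σ) : ℤˣ) : ℤ) : ℚ))
      = -(∑ σ : Equiv.Perm (Fin N),
          MonoidAlgebra.single (Equiv.swap (Fin.castSucc c) (Fin.last N) * iotaPerm N σ)
            (((Equiv.Perm.sign σ : ℤˣ) : ℤ) : ℚ)) := by
    intro c
    rw [← Finset.sum_neg_distrib]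
    refine Finset.sum_congr rfl fun σ _ => ?_
    have hsgn : Equiv.Perm.sign (Equiv.swap (Fin.castSucc c) (Fin.last N) * iotaPerm N σ)
        = - Equiv.Perm.sign σ := by
      rw [map_mul, Equiv.Perm.sign_swap (Fin.castSucc_lt_last c).ne, iotaPerm_sign, neg_one_mul]
    rw [hsgn]
    rw [← MonoidAlgebra.single_neg]
    norm_num
  rw [hterm_last]
  have : ∑ c : Fin N, (∑ σ : Equiv.Perm (Fin N),
      MonoidAlgebra.single (Equiv.swap (Fin.castSucc c) (Fin.last N) * iotaPerm N σ)
        (((Equiv.Perm.sign (Equiv.swap (Fin.castSucc c) (Fin.last N) * iotaPerm N σ) : ℤˣ) : ℤ) : ℚ))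
      = - cup (tauPrime N) (iota N (eps N)) := by
    rw [hcup, ← Finset.sum_neg_distrib]
    exact Finset.sum_congr rfl fun c _ => hterm_c c
  rw [this]
  abel

lemma isSwap_iotaPerm_iff (σ : Equiv.Perm (Fin N)) :
    (iotaPerm N σ).IsSwap ↔ σ.IsSwap := by
  constructor
  · rintro ⟨x, y, hxy, hs⟩
    have hx : x ≠ Fin.last N := by
      rintro rfl
      have := iotaPerm_last σ
      rw [hs, Equiv.swap_apply_left] at this
      exact hxy this.symm
    have hy : y ≠ Fin.last N := by
      rintro rfl
      have := iotaPerm_last σ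
      rw [hs, Equiv.swap_apply_right] at this
      exact hxy this
    obtain ⟨x₀, rfl⟩ := Fin.exists_castSucc_eq.mpr hx
    obtain ⟨y₀, rfl⟩ := Fin.exists_castSucc_eq.mpr hy
    have : iotaPerm N σ = iotaPerm N (Equiv.swap x₀ y₀) := by
      rw [iotaPerm_swap, hs]
    have hσ := iotaPerm_injective this
    exact ⟨x₀, y₀, fun hc => hxy (congrArg Fin.castSucc hc), hσ⟩
  · rintro ⟨x, y, hxy, rfl⟩
    exact ⟨Fin.castSucc x, Fin.castSucc y,
      fun hc => hxy (Fin.castSucc_injective N hc), iotaPerm_swap x y⟩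

lemma isSwap_swapLast_mul_iff (c : Fin N) (σ : Equiv.Perm (Fin N)) :
    (Equiv.swap (Fin.castSucc c) (Fin.last N) * iotaPerm N σ).IsSwap ↔ σ = 1 := by
  constructor
  · rintro ⟨x, y, hxy, hs⟩
    have hlastval : (Equiv.swap (Fin.castSucc c) (Fin.last N) * iotaPerm N σ) (Fin.last N)
        = Fin.castSucc c := by
      rw [Equiv.Perm.mul_apply, iotaPerm_last, Equiv.swap_apply_right]
    have hswap_eq : Equiv.swap x y = Equiv.swap (Fin.castSucc c) (Fin.last N) := by
      rw [hs] at hlastval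
      -- swap x y (last) = castSucc c ≠ last, so last ∈ {x, y}
      rcases eq_or_ne x (Fin.last N) with rfl | hx
      · -- swap last y last = y
        rw [Equiv.swap_apply_left] at hlastval
        rw [hlastval, Equiv.swap_comm]
      rcases eq_or_ne y (Fin.last N) with rfl | hy
      · rw [Equiv.swap_apply_right] at hlastval
        rw [hlastval]
      · rw [Equiv.swap_apply_of_ne_of_ne (Ne.symm hx) (Ne.symm hy)] at hlastval
        exact absurd hlastval.symm (Fin.castSucc_lt_last c).ne
    rw [hswap_eq] at hs
    have : iotaPerm N σ = 1 :=
      mul_left_cancel (hs.trans (mul_one (Equiv.swap (Fin.castSucc c) (Fin.last N))).symm)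
    have h1 : iotaPerm N σ = iotaPerm N 1 := by rw [this, iotaPerm_one]
    exact iotaPerm_injective h1
  · rintro rfl
    rw [iotaPerm_one, mul_one]
    exact ⟨Fin.castSucc c, Fin.last N, (Fin.castSucc_lt_last c).ne, rfl⟩

open scoped Classical in
lemma tau_succ : tau (N + 1) = iota N (tau N) + tauPrime N := by
  rw [tau_eq]
  have hexp : (∑ ρ : Equiv.Perm (Fin (N+1)),
      MonoidAlgebra.single ρ (if ρ.IsSwap then (1:ℚ) else 0))
      = ∑ p : Fin (N+1) × Equiv.Perm (Fin N),
        MonoidAlgebra.single (Equiv.swap p.1 (Fin.last N) * iotaPerm N p.2)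
          (if (Equiv.swap p.1 (Fin.last N) * iotaPerm N p.2).IsSwap then (1:ℚ) else 0) :=
    (Fintype.sum_bijective _ bijE _ _ (fun p => rfl)).symm
  rw [hexp, Fintype.sum_prod_type, Fin.sum_univ_castSucc]
  have hterm_last : (∑ σ : Equiv.Perm (Fin N),
      MonoidAlgebra.single (Equiv.swap (Fin.last N) (Fin.last N) * iotaPerm N σ)
        (if (Equiv.swap (Fin.last N) (Fin.last N) * iotaPerm N σ).IsSwap then (1:ℚ) else 0))
      = iota N (tau N) := by
    have : iota N (tau N) = ∑ σ : Equiv.Perm (Fin N),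
        MonoidAlgebra.single (iotaPerm N σ) (if σ.IsSwap then (1:ℚ) else 0) := by
      rw [tau_eq, iota_sum]
      exact Finset.sum_congr rfl fun σ _ => iota_single σ _
    rw [this]
    refine Finset.sum_congr rfl fun σ _ => ?_
    rw [Equiv.swap_self]
    have h1 : (Equiv.refl (Fin (N+1)) : Equiv.Perm (Fin (N+1))) * iotaPerm N σ = iotaPerm N σ :=
      one_mul _
    rw [h1]
    by_cases h : σ.IsSwap
    · rw [if_pos h, if_pos ((isSwap_iotaPerm_iff σ).mpr h)]
    · rw [if_neg h, if_neg (fun hc => h ((isSwap_iotaPerm_iff σ).mp hc))]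
  have hterm_c : ∀ c : Fin N, (∑ σ : Equiv.Perm (Fin N),
      MonoidAlgebra.single (Equiv.swap (Fin.castSucc c) (Fin.last N) * iotaPerm N σ)
        (if (Equiv.swap (Fin.castSucc c) (Fin.last N) * iotaPerm N σ).IsSwap then (1:ℚ) else 0))
      = MonoidAlgebra.single (Equiv.swap (Fin.castSucc c) (Fin.last N)) (1:ℚ) := by
    intro c
    rw [Finset.sum_eq_single 1]
    · rw [if_pos ((isSwap_swapLast_mul_iff c 1).mpr rfl), iotaPerm_one, mul_one]
    · intro σ _ hσ
      rw [if_neg (fun hc => hσ ((isSwap_swapLast_mul_iff c σ).mp hc))]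
      exact MonoidAlgebra.single_zero _
    · intro h
      exact absurd (Finset.mem_univ 1) h
  rw [hterm_last]
  have : ∑ c : Fin N, (∑ σ : Equiv.Perm (Fin N),
      MonoidAlgebra.single (Equiv.swap (Fin.castSucc c) (Fin.last N) * iotaPerm N σ)
        (if (Equiv.swap (Fin.castSucc c) (Fin.last N) * iotaPerm N σ).IsSwap then (1:ℚ) else 0))
      = tauPrime N := by
    unfold tauPrime
    exact Finset.sum_congr rfl fun c _ => hterm_c c
  rw [this]
  exact add_comm _ _

end Aux

set_option maxHeartbeats 2000000

/-- For every `n ≥ 1` and every rational class function `y` on `S_n`, in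
`C(S_{n+1}) ⊗ ℚ` one has
`ε_{n+1} ∪ r_1(y) − r_1(ε_n ∪ y) = −τ_{n+1} ∪ r_1(ε_n ∪ y) + r_1(τ_n ∪ ε_n ∪ y)`. -/
theorem eps_r1_commutator (n : ℕ) (hn : 1 ≤ n)
    (y : MonoidAlgebra ℚ (Equiv.Perm (Fin n))) (hy : IsClassFun y) :
    cup (eps (n + 1)) (r1 n y) - r1 n (cup (eps n) y) =
      -cup (tau (n + 1)) (r1 n (cup (eps n) y)) +
        r1 n (cup (tau n) (cup (eps n) y)) := by
  set z := cup (eps n) y with hz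
  set w := cup (tau n) z with hw
  set c0 : ℚ := (n.factorial : ℚ)⁻¹ with hc0
  have hr1 : ∀ x : MonoidAlgebra ℚ (Equiv.Perm (Fin n)),
      r1 n x = c0 • ∑ t : Equiv.Perm (Fin (n+1)), conjA t (iota n x) := fun x => rfl
  have hιz : cup (iota n (eps n)) (iota n y) = iota n z := by
    rw [hz]
    exact (iota_cup _ _).symm
  have hepsy : cup (eps (n+1)) (iota n y) = iota n z - cup (tauPrime n) (iota n z) := by
    rw [eps_succ, cup_sub_left, cup_assoc, hιz]
  have htauz : cup (tau (n+1)) (iota n z) = iota n w + cup (tauPrime n) (iota n z) := by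
    rw [tau_succ, cup_add_left, ← iota_cup, ← hw]
  have e1 : cup (eps (n+1)) (r1 n y)
      = c0 • ∑ t : Equiv.Perm (Fin (n+1)),
          conjA t (iota n z - cup (tauPrime n) (iota n z)) := by
    rw [hr1 y, cup_smul_right, cup_sum_right]
    congr 1
    refine Finset.sum_congr rfl fun t _ => ?_
    rw [eps_conjA_comm, hepsy]
  have e3 : cup (tau (n+1)) (r1 n z)
      = c0 • ∑ t : Equiv.Perm (Fin (n+1)),
          conjA t (iota n w + cup (tauPrime n) (iota n z)) := by
    rw [hr1 z, cup_smul_right, cup_sum_right]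
    congr 1
    refine Finset.sum_congr rfl fun t _ => ?_
    rw [tau_conjA_comm, htauz]
  rw [e1, e3, hr1 z, hr1 w]
  rw [← smul_sub, ← smul_neg, ← smul_add]
  congr 1
  rw [← Finset.sum_sub_distrib, ← Finset.sum_neg_distrib, ← Finset.sum_add_distrib]
  refine Finset.sum_congr rfl fun t _ => ?_
  rw [conjA_sub, conjA_add]
  abel

end
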